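/- Let ρ = ∑_{k,j} ρ_{jk} |e_{jk}⟩⟨e_{jk}| ⊗ |f_k⟩⟨f_k| and σ = ∑_{k,j} σ_{jk} |ẽ_{jk}⟩⟨ẽ_{jk}| ⊗ |f_k⟩⟨f_k| be quantum-classical states, where for each k the families {e_{jk}}_j and {ẽ_{jk}}_j are orthonormal bases of H^A ordered so that the eigenvalue sequences (p_{jk})_j and (q_{jk})_j are nonincreasing. Then F(ρ,σ) = ‖√ρ·√σ‖₁ ≤ ∑_{k,j} √(ρ_{jk})·√(σ_{jk}). -/

import Mathlib

open Matrix Kronecker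
open scoped ComplexOrder

/-- The positive semidefinite square root of a positive semidefinite matrix
(the definition `Matrix.PosSemidef.sqrt` of the older Mathlib, removed since). -/
noncomputable def Matrix.PosSemidef.sqrt {n : Type*} [Fintype n] [DecidableEq n]
    {𝕜 : Type*} [RCLike 𝕜] {A : Matrix n n 𝕜} (hA : A.PosSemidef) : Matrix n n 𝕜 :=
  hA.1.eigenvectorUnitary.1 * diagonal ((↑) ∘ (√·) ∘ hA.1.eigenvalues) *
  (star hA.1.eigenvectorUnitary : Matrix n n 𝕜)

/-- The trace norm of a (square complex) matrix: `‖A‖₁ = tr √(Aᴴ A)`. -/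
noncomputable def traceNorm {m : Type*} [Fintype m] [DecidableEq m]
    (A : Matrix m m ℂ) : ℝ :=
  ((Matrix.posSemidef_conjTranspose_mul_self A).sqrt).trace.re

set_option linter.unusedSectionVars false
set_option linter.unusedTactic false
set_option linter.unreachableTactic false


section Bessel
variable {ι m : Type*} [Fintype ι] [Fintype m]

lemma qc_conj_inn (v x : m → ℂ) : (starRingEnd ℂ) (star v ⬝ᵥ x) = star x ⬝ᵥ v := by
  simp [dotProduct, map_sum, mul_comm]

lemma qc_re_inn_self (y : m → ℂ) : (star y ⬝ᵥ y).re = ∑ i, Complex.normSq (y i) := by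
  simp only [dotProduct, Pi.star_apply, Complex.re_sum]
  congr 1; ext i
  rw [mul_comm, Complex.star_def, Complex.mul_conj]
  simp

lemma qc_re_inn_self_nonneg (y : m → ℂ) : 0 ≤ (star y ⬝ᵥ y).re := by
  rw [qc_re_inn_self]
  exact Finset.sum_nonneg fun i _ => Complex.normSq_nonneg _


lemma qc_sum_dotProduct (f : ι → m → ℂ) (x : m → ℂ) :
    (∑ t, f t) ⬝ᵥ x = ∑ t, f t ⬝ᵥ x := by
  simp only [dotProduct, Finset.sum_apply, Finset.sum_mul]
  exact Finset.sum_comm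

lemma qc_dotProduct_sum (x : m → ℂ) (f : ι → m → ℂ) :
    x ⬝ᵥ (∑ t, f t) = ∑ t, x ⬝ᵥ f t := by
  simp only [dotProduct, Finset.sum_apply, Finset.mul_sum]
  exact Finset.sum_comm

lemma qc_norm_comb_le (v : ι → m → ℂ)
    (horth : ∀ t u, t ≠ u → star (v t) ⬝ᵥ v u = 0)
    (hnorm : ∀ t, (star (v t) ⬝ᵥ v t).re ≤ 1) (c : ι → ℂ) :
    (star (∑ t, c t • v t) ⬝ᵥ (∑ t, c t • v t)).re ≤ ∑ t, Complex.normSq (c t) := by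
  have hstar : star (∑ t, c t • v t) = ∑ t, (starRingEnd ℂ) (c t) • star (v t) := by
    rw [star_sum]; congr 1; ext t; rw [star_smul]; rfl
  rw [hstar, qc_sum_dotProduct]
  have h1 : ∀ t, ((starRingEnd ℂ) (c t) • star (v t)) ⬝ᵥ (∑ u, c u • v u)
      = Complex.normSq (c t) * (star (v t) ⬝ᵥ v t) := by
    intro t
    rw [qc_dotProduct_sum]
    rw [Finset.sum_eq_single t]
    · rw [smul_dotProduct, dotProduct_smul, smul_eq_mul, smul_eq_mul, ← mul_assoc,
        mul_comm ((starRingEnd ℂ) (c t)), Complex.mul_conj]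
    · intro u _ hu
      rw [smul_dotProduct, dotProduct_smul, horth t u (Ne.symm hu)]
      simp
    · intro h; exact absurd (Finset.mem_univ t) h
  simp only [h1]
  calc (∑ t, (Complex.normSq (c t) : ℂ) * (star (v t) ⬝ᵥ v t)).re
      = ∑ t, Complex.normSq (c t) * (star (v t) ⬝ᵥ v t).re := by
        rw [Complex.re_sum]; congr 1; ext t; exact Complex.re_ofReal_mul _ _
    _ ≤ ∑ t, Complex.normSq (c t) * 1 := by
        apply Finset.sum_le_sum
        intro t _
        exact mul_le_mul_of_nonneg_left (hnorm t) (Complex.normSq_nonneg _)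
    _ = ∑ t, Complex.normSq (c t) := by simp

lemma qc_bessel (v : ι → m → ℂ)
    (horth : ∀ t u, t ≠ u → star (v t) ⬝ᵥ v u = 0)
    (hnorm : ∀ t, (star (v t) ⬝ᵥ v t).re ≤ 1) (x : m → ℂ) :
    ∑ t, Complex.normSq (star (v t) ⬝ᵥ x) ≤ (star x ⬝ᵥ x).re := by
  set c : ι → ℂ := fun t => star (v t) ⬝ᵥ x with hc
  set S : m → ℂ := ∑ t, c t • v t with hS
  have key1 : star S ⬝ᵥ x = (∑ t, Complex.normSq (c t) : ℝ) := by
    have hstar : star S = ∑ t, (starRingEnd ℂ) (c t) • star (v t) := by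
      rw [hS, star_sum]; congr 1; ext t; rw [star_smul]; rfl
    rw [hstar, qc_sum_dotProduct]
    rw [Complex.ofReal_sum]
    congr 1; ext t
    rw [smul_dotProduct, smul_eq_mul]
    show (starRingEnd ℂ) (c t) * c t = _
    rw [mul_comm, Complex.mul_conj]
  have key2 : star x ⬝ᵥ S = (∑ t, Complex.normSq (c t) : ℝ) := by
    rw [hS, qc_dotProduct_sum, Complex.ofReal_sum]
    congr 1; ext t
    rw [dotProduct_smul, smul_eq_mul]
    have : star x ⬝ᵥ v t = (starRingEnd ℂ) (c t) := by
      rw [hc]; exact (qc_conj_inn (v t) x).symm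
    rw [this, Complex.mul_conj]
  have hy := qc_re_inn_self_nonneg (x - S)
  have hexp : star (x - S) ⬝ᵥ (x - S)
      = star x ⬝ᵥ x - star x ⬝ᵥ S - star S ⬝ᵥ x + star S ⬝ᵥ S := by
    rw [star_sub, sub_dotProduct, dotProduct_sub, dotProduct_sub]
    ring
  rw [hexp] at hy
  have hSS := qc_norm_comb_le v horth hnorm c
  rw [← hS] at hSS
  have : (star x ⬝ᵥ x - star x ⬝ᵥ S - star S ⬝ᵥ x + star S ⬝ᵥ S).re
      = (star x ⬝ᵥ x).re - (∑ t, Complex.normSq (c t))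
        - (∑ t, Complex.normSq (c t)) + (star S ⬝ᵥ S).re := by
    rw [Complex.add_re, Complex.sub_re, Complex.sub_re, key1, key2]
    simp
  rw [this] at hy
  linarith

end Bessel


section MatrixHelpers
variable {ι m m' : Type*} [Fintype ι] [Fintype m] [Fintype m']

lemma qc_vecMulVec_mulVec (a b x : m → ℂ) :
    vecMulVec a b *ᵥ x = (b ⬝ᵥ x) • a := by
  ext i
  simp only [mulVec, dotProduct, vecMulVec_apply, Pi.smul_apply, smul_eq_mul, Finset.sum_mul]
  exact Finset.sum_congr rfl fun j _ => by ring

lemma qc_vecMulVec_mul (a b c d : m → ℂ) :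
    vecMulVec a b * vecMulVec c d = (b ⬝ᵥ c) • vecMulVec a d := by
  ext i j
  simp only [mul_apply, vecMulVec_apply, Matrix.smul_apply, smul_eq_mul, dotProduct, Finset.sum_mul]
  exact Finset.sum_congr rfl fun k _ => by ring

lemma qc_kron_vecMulVec (u : m → ℂ) (g : m' → ℂ) :
    vecMulVec u (star u) ⊗ₖ vecMulVec g (star g)
      = vecMulVec (fun x : m × m' => u x.1 * g x.2) (star fun x : m × m' => u x.1 * g x.2) := by
  ext x y
  simp only [kroneckerMap_apply, vecMulVec_apply, Pi.star_apply, star_mul']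
  ring

lemma qc_dot_tensor (u v : m → ℂ) (g h : m' → ℂ) :
    (star fun x : m × m' => u x.1 * g x.2) ⬝ᵥ (fun x : m × m' => v x.1 * h x.2)
      = (star u ⬝ᵥ v) * (star g ⬝ᵥ h) := by
  simp only [dotProduct, Pi.star_apply, star_mul']
  rw [← Finset.univ_product_univ, Finset.sum_product, Finset.sum_mul]
  refine Finset.sum_congr rfl fun i _ => ?_
  rw [Finset.mul_sum]
  exact Finset.sum_congr rfl fun j _ => by ring

lemma qc_sum_mulVec (f : ι → Matrix m m ℂ) (x : m → ℂ) :
    (∑ i, f i) *ᵥ x = ∑ i, f i *ᵥ x := by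
  ext j
  simp only [mulVec, dotProduct, Matrix.sum_apply, Finset.sum_apply, Finset.sum_mul]
  exact Finset.sum_comm

lemma qc_posSemidef_sum [DecidableEq m] (c : ι → ℝ) (hc : ∀ i, 0 ≤ c i) (u : ι → m → ℂ) :
    PosSemidef (∑ i, ((c i : ℂ)) • vecMulVec (u i) (star (u i))) := by
  rw [posSemidef_iff_dotProduct_mulVec]
  constructor
  · show _ᴴ = _
    rw [conjTranspose_sum]
    refine Finset.sum_congr rfl fun i _ => ?_
    ext x y
    simp only [conjTranspose_apply, Matrix.smul_apply, vecMulVec_apply, Pi.star_apply,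
      star_mul', star_star, smul_eq_mul, Complex.star_def, _root_.map_mul,
      Complex.conj_ofReal, Complex.conj_conj]
    ring
  · intro x
    rw [qc_sum_mulVec, qc_dotProduct_sum]
    refine Finset.sum_nonneg fun i _ => ?_
    rw [smul_mulVec, qc_vecMulVec_mulVec, dotProduct_smul, dotProduct_smul]
    have h1 : star x ⬝ᵥ u i = (starRingEnd ℂ) (star (u i) ⬝ᵥ x) := (qc_conj_inn (u i) x).symm
    rw [h1, smul_eq_mul, smul_eq_mul, Complex.mul_conj]
    rw [show ((c i : ℂ) * (Complex.normSq (star (u i) ⬝ᵥ x) : ℂ))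
        = ((c i * Complex.normSq (star (u i) ⬝ᵥ x) : ℝ) : ℂ) by push_cast; ring]
    rw [Complex.zero_le_real]
    exact mul_nonneg (hc i) (Complex.normSq_nonneg _)
end MatrixHelpers

open scoped MatrixOrder in
lemma qc_eq_sqrt_of_sq_eq {n : Type*} [Fintype n] [DecidableEq n] {A B : Matrix n n ℂ}
    (hB : B.PosSemidef) (hA : A.PosSemidef) (h : B ^ 2 = A) : B = hA.sqrt := by
  have h1 : hA.sqrt = CFC.sqrt A := by
    rw [CFC.sqrt_eq_cfc, cfc_nnreal_eq_real _ A, hA.1.cfc_eq]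
    simp only [IsHermitian.cfc, Matrix.PosSemidef.sqrt, Unitary.conjStarAlgAut_apply]
    congr 3
    funext i
    simp [Real.coe_sqrt, Real.coe_toNNReal', max_eq_left (hA.eigenvalues_nonneg i)]
  rw [h1]
  exact (CFC.sqrt_unique (by rw [← h, sq]) hB.nonneg).symm


lemma qc_sum_dotProduct' {ι m : Type*} [Fintype ι] [Fintype m] (f : ι → m → ℂ) (x : m → ℂ) :
    (∑ t, f t) ⬝ᵥ x = ∑ t, f t ⬝ᵥ x := by
  simp only [dotProduct, Finset.sum_apply, Finset.sum_mul]
  exact Finset.sum_comm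

lemma qc_trace_sqrt {n : Type*} [Fintype n] [DecidableEq n]
    (A : Matrix n n ℂ) (hA : A.PosSemidef) :
    hA.sqrt.trace.re = ∑ t, Real.sqrt (hA.1.eigenvalues t) := by
  have h : hA.sqrt.trace = ∑ t, (Real.sqrt (hA.1.eigenvalues t) : ℂ) := by
    unfold Matrix.PosSemidef.sqrt
    rw [Matrix.trace_mul_cycle]
    rw [show star (hA.1.eigenvectorUnitary.1) * hA.1.eigenvectorUnitary.1 = 1 from
      Matrix.mem_unitaryGroup_iff'.mp hA.1.eigenvectorUnitary.2]
    rw [one_mul, Matrix.trace_diagonal]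
    rfl
  rw [h, Complex.re_sum]
  exact Finset.sum_congr rfl fun t _ => Complex.ofReal_re _

lemma qc_sq_sum {ι m : Type*} [Fintype ι] [DecidableEq ι] [Fintype m] [DecidableEq m]
    (c : ι → ℝ) (u : ι → m → ℂ)
    (hu : ∀ i j, star (u i) ⬝ᵥ u j = if i = j then 1 else 0) :
    (∑ i, ((c i : ℝ) : ℂ) • vecMulVec (u i) (star (u i)))
      * (∑ i, ((c i : ℝ) : ℂ) • vecMulVec (u i) (star (u i)))
    = ∑ i, ((c i * c i : ℝ) : ℂ) • vecMulVec (u i) (star (u i)) := by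
  rw [Finset.sum_mul]
  refine Finset.sum_congr rfl fun i _ => ?_
  rw [Finset.mul_sum]
  rw [Finset.sum_eq_single i]
  · rw [smul_mul_assoc, mul_smul_comm, qc_vecMulVec_mul, hu, if_pos rfl, one_smul,
      smul_smul]
    push_cast
    ring_nf
  · intro j _ hji
    rw [smul_mul_assoc, mul_smul_comm, qc_vecMulVec_mul, hu, if_neg (Ne.symm hji)]
    simp
  · intro h; exact absurd (Finset.mem_univ i) h

lemma qc_mul_expand {ι₁ ι₂ m : Type*} [Fintype ι₁] [Fintype ι₂] [Fintype m]
    (c : ι₁ → ℝ) (d : ι₂ → ℝ) (u : ι₁ → m → ℂ) (w : ι₂ → m → ℂ) :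
    (∑ x, ((c x : ℝ) : ℂ) • vecMulVec (u x) (star (u x)))
      * (∑ y, ((d y : ℝ) : ℂ) • vecMulVec (w y) (star (w y)))
    = ∑ x, ∑ y, (((c x : ℝ) : ℂ) * ((d y : ℝ) : ℂ) * (star (u x) ⬝ᵥ w y)) •
        vecMulVec (u x) (star (w y)) := by
  rw [Finset.sum_mul]
  refine Finset.sum_congr rfl fun x _ => ?_
  rw [Finset.mul_sum]
  refine Finset.sum_congr rfl fun y _ => ?_
  rw [smul_mul_assoc, mul_smul_comm, qc_vecMulVec_mul, smul_smul, smul_smul, mul_assoc]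


section Substoch

private lemma qc_R_le_aux {n : ℕ} (S : Fin n → Fin n → ℝ)
    (hS0 : ∀ i j, 0 ≤ S i j) (hSrow : ∀ i, ∑ j, S i j ≤ 1)
    {t s : ℕ} (hts : t ≤ s) :
    ∑ i : Fin n, ∑ j : Fin n, (if i.1 ≤ t ∧ j.1 ≤ s then S i j else 0)
      ≤ ∑ i : Fin n, (if i.1 ≤ t ∧ i.1 ≤ s then (1:ℝ) else 0) := by
  refine Finset.sum_le_sum fun i _ => ?_
  by_cases hit : i.1 ≤ t
  · have his : i.1 ≤ s := le_trans hit hts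
    rw [if_pos ⟨hit, his⟩]
    calc ∑ j : Fin n, (if i.1 ≤ t ∧ j.1 ≤ s then S i j else 0)
        ≤ ∑ j : Fin n, S i j := by
          refine Finset.sum_le_sum fun j _ => ?_
          split_ifs with h
          · exact le_refl _
          · exact hS0 i j
      _ ≤ 1 := hSrow i
  · rw [if_neg (fun h : _ ∧ _ => hit h.1)]
    refine le_of_eq (Finset.sum_eq_zero fun j _ => ?_)
    exact if_neg (fun h : _ ∧ _ => hit h.1)

private lemma qc_R_le {n : ℕ} (S : Fin n → Fin n → ℝ)
    (hS0 : ∀ i j, 0 ≤ S i j) (hSrow : ∀ i, ∑ j, S i j ≤ 1) (hScol : ∀ j, ∑ i, S i j ≤ 1)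
    (t s : ℕ) :
    ∑ i : Fin n, ∑ j : Fin n, (if i.1 ≤ t ∧ j.1 ≤ s then S i j else 0)
      ≤ ∑ i : Fin n, (if i.1 ≤ t ∧ i.1 ≤ s then (1:ℝ) else 0) := by
  rcases le_total t s with hts | hst
  · exact qc_R_le_aux S hS0 hSrow hts
  · have h1 : ∑ i : Fin n, ∑ j : Fin n, (if i.1 ≤ t ∧ j.1 ≤ s then S i j else 0)
        = ∑ j : Fin n, ∑ i : Fin n, (if j.1 ≤ s ∧ i.1 ≤ t then (fun a b => S b a) j i else 0) := by
      rw [Finset.sum_comm]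
      exact Finset.sum_congr rfl fun j _ => Finset.sum_congr rfl fun i _ => by
        simp only [and_comm]
    rw [h1]
    have h2 := qc_R_le_aux (fun a b => S b a) (fun i j => hS0 j i) hScol hst
    refine le_trans h2 (le_of_eq ?_)
    exact Finset.sum_congr rfl fun i _ => by simp only [and_comm]

lemma qc_substoch {n : ℕ} (a b : Fin n → ℝ) (S : Fin n → Fin n → ℝ)
    (ha0 : ∀ i, 0 ≤ a i) (hb0 : ∀ i, 0 ≤ b i)
    (hamono : ∀ i j : Fin n, i ≤ j → a j ≤ a i)
    (hbmono : ∀ i j : Fin n, i ≤ j → b j ≤ b i)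
    (hS0 : ∀ i j, 0 ≤ S i j)
    (hSrow : ∀ i, ∑ j, S i j ≤ 1) (hScol : ∀ j, ∑ i, S i j ≤ 1) :
    ∑ i, ∑ j, a i * b j * S i j ≤ ∑ i, a i * b i := by
  classical
  set a' : ℕ → ℝ := fun i => if h : i < n then a ⟨i, h⟩ else 0 with ha'
  set b' : ℕ → ℝ := fun i => if h : i < n then b ⟨i, h⟩ else 0 with hb'
  set da : ℕ → ℝ := fun t => a' t - a' (t + 1) with hda'
  set db : ℕ → ℝ := fun t => b' t - b' (t + 1) with hdb'
  have ha'mono : ∀ u v : ℕ, u ≤ v → a' v ≤ a' u := by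
    intro u v huv
    simp only [ha']
    split_ifs with h1 h2 h2
    · exact hamono ⟨u, h2⟩ ⟨v, h1⟩ huv
    · exact absurd (lt_of_le_of_lt huv h1) h2
    · exact ha0 _
    · exact le_refl _
  have hb'mono : ∀ u v : ℕ, u ≤ v → b' v ≤ b' u := by
    intro u v huv
    simp only [hb']
    split_ifs with h1 h2 h2
    · exact hbmono ⟨u, h2⟩ ⟨v, h1⟩ huv
    · exact absurd (lt_of_le_of_lt huv h1) h2
    · exact hb0 _
    · exact le_refl _
  have hda0 : ∀ t, 0 ≤ da t := fun t => sub_nonneg.mpr (ha'mono t (t+1) (Nat.le_succ t))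
  have hdb0 : ∀ t, 0 ≤ db t := fun t => sub_nonneg.mpr (hb'mono t (t+1) (Nat.le_succ t))
  have htel : ∀ c' : ℕ → ℝ, c' n = 0 → ∀ i : Fin n,
      c' i.1 = ∑ t ∈ Finset.range n, (if i.1 ≤ t then c' t - c' (t+1) else 0) := by
    intro c' hcn i
    rw [Finset.sum_ite, Finset.sum_const_zero, add_zero]
    have hfilter : Finset.filter (fun t => i.1 ≤ t) (Finset.range n) = Finset.Ico i.1 n := by
      ext t
      simp [Finset.mem_Ico, Finset.mem_range, Finset.mem_filter, and_comm]
    rw [hfilter]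
    rw [Finset.sum_Ico_eq_sub _ (le_of_lt i.2)]
    rw [Finset.sum_range_sub' c', Finset.sum_range_sub' c', hcn]
    ring
  have hrepa : ∀ i : Fin n, a i = ∑ t ∈ Finset.range n, (if i.1 ≤ t then da t else 0) := by
    intro i
    have : a i = a' i.1 := by simp [ha', i.2]
    rw [this]
    exact htel a' (by simp [ha']) i
  have hrepb : ∀ i : Fin n, b i = ∑ t ∈ Finset.range n, (if i.1 ≤ t then db t else 0) := by
    intro i
    have : b i = b' i.1 := by simp [hb', i.2]
    rw [this]
    exact htel b' (by simp [hb']) i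
  -- expand both sides
  have hLHS : ∑ i, ∑ j, a i * b j * S i j
      = ∑ t ∈ Finset.range n, ∑ s ∈ Finset.range n, da t * db s *
          (∑ i : Fin n, ∑ j : Fin n, (if i.1 ≤ t ∧ j.1 ≤ s then S i j else 0)) := by
    have step1 : ∀ (i j : Fin n), a i * b j * S i j
        = ∑ t ∈ Finset.range n, ∑ s ∈ Finset.range n,
            da t * db s * (if i.1 ≤ t ∧ j.1 ≤ s then S i j else 0) := by
      intro i j
      rw [hrepa i, hrepb j, Finset.sum_mul, Finset.sum_mul]
      refine Finset.sum_congr rfl fun t _ => ?_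
      rw [Finset.mul_sum, Finset.sum_mul]
      refine Finset.sum_congr rfl fun s _ => ?_
      by_cases h1 : i.1 ≤ t <;> by_cases h2 : j.1 ≤ s <;>
        simp [h1, h2] <;> ring
    calc ∑ i, ∑ j, a i * b j * S i j
        = ∑ i : Fin n, ∑ j : Fin n, ∑ t ∈ Finset.range n, ∑ s ∈ Finset.range n,
            da t * db s * (if i.1 ≤ t ∧ j.1 ≤ s then S i j else 0) := by
          exact Finset.sum_congr rfl fun i _ => Finset.sum_congr rfl fun j _ => step1 i j
      _ = ∑ i : Fin n, ∑ t ∈ Finset.range n, ∑ j : Fin n, ∑ s ∈ Finset.range n,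
            da t * db s * (if i.1 ≤ t ∧ j.1 ≤ s then S i j else 0) := by
          exact Finset.sum_congr rfl fun i _ => Finset.sum_comm
      _ = ∑ t ∈ Finset.range n, ∑ i : Fin n, ∑ j : Fin n, ∑ s ∈ Finset.range n,
            da t * db s * (if i.1 ≤ t ∧ j.1 ≤ s then S i j else 0) := Finset.sum_comm
      _ = ∑ t ∈ Finset.range n, ∑ i : Fin n, ∑ s ∈ Finset.range n, ∑ j : Fin n,
            da t * db s * (if i.1 ≤ t ∧ j.1 ≤ s then S i j else 0) := by
          exact Finset.sum_congr rfl fun t _ => Finset.sum_congr rfl fun i _ => Finset.sum_comm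
      _ = ∑ t ∈ Finset.range n, ∑ s ∈ Finset.range n, ∑ i : Fin n, ∑ j : Fin n,
            da t * db s * (if i.1 ≤ t ∧ j.1 ≤ s then S i j else 0) := by
          exact Finset.sum_congr rfl fun t _ => Finset.sum_comm
      _ = _ := by
          refine Finset.sum_congr rfl fun t _ => Finset.sum_congr rfl fun s _ => ?_
          rw [Finset.mul_sum]
          refine Finset.sum_congr rfl fun i _ => ?_
          rw [Finset.mul_sum]
  have hRHS : ∑ i, a i * b i
      = ∑ t ∈ Finset.range n, ∑ s ∈ Finset.range n, da t * db s *
          (∑ i : Fin n, (if i.1 ≤ t ∧ i.1 ≤ s then (1:ℝ) else 0)) := by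
    have step1 : ∀ (i : Fin n), a i * b i
        = ∑ t ∈ Finset.range n, ∑ s ∈ Finset.range n,
            da t * db s * (if i.1 ≤ t ∧ i.1 ≤ s then (1:ℝ) else 0) := by
      intro i
      rw [hrepa i, hrepb i, Finset.sum_mul]
      refine Finset.sum_congr rfl fun t _ => ?_
      rw [Finset.mul_sum]
      refine Finset.sum_congr rfl fun s _ => ?_
      by_cases h1 : i.1 ≤ t <;> by_cases h2 : i.1 ≤ s <;>
        simp [h1, h2] <;> ring
    calc ∑ i, a i * b i
        = ∑ i : Fin n, ∑ t ∈ Finset.range n, ∑ s ∈ Finset.range n,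
            da t * db s * (if i.1 ≤ t ∧ i.1 ≤ s then (1:ℝ) else 0) := by
          exact Finset.sum_congr rfl fun i _ => step1 i
      _ = ∑ t ∈ Finset.range n, ∑ i : Fin n, ∑ s ∈ Finset.range n,
            da t * db s * (if i.1 ≤ t ∧ i.1 ≤ s then (1:ℝ) else 0) := Finset.sum_comm
      _ = ∑ t ∈ Finset.range n, ∑ s ∈ Finset.range n, ∑ i : Fin n,
            da t * db s * (if i.1 ≤ t ∧ i.1 ≤ s then (1:ℝ) else 0) := by
          exact Finset.sum_congr rfl fun t _ => Finset.sum_comm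
      _ = _ := by
          refine Finset.sum_congr rfl fun t _ => Finset.sum_congr rfl fun s _ => ?_
          rw [Finset.mul_sum]
  rw [hLHS, hRHS]
  refine Finset.sum_le_sum fun t _ => Finset.sum_le_sum fun s _ => ?_
  exact mul_le_mul_of_nonneg_left (qc_R_le S hS0 hSrow hScol t s)
    (mul_nonneg (hda0 t) (hdb0 s))

end Substoch

theorem qc_main {dA dB : ℕ} (c d : Fin dB × Fin dA → ℝ)
    (hc0 : ∀ x, 0 ≤ c x) (hd0 : ∀ x, 0 ≤ d x)
    (hcmono : ∀ (k : Fin dB) (i j : Fin dA), i ≤ j → c (k, j) ≤ c (k, i))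
    (hdmono : ∀ (k : Fin dB) (i j : Fin dA), i ≤ j → d (k, j) ≤ d (k, i))
    (u uF : Fin dB × Fin dA → (Fin dA × Fin dB → ℂ))
    (hu : ∀ x y, star (u x) ⬝ᵥ u y = if x = y then 1 else 0)
    (huF : ∀ x y, star (uF x) ⬝ᵥ uF y = if x = y then 1 else 0)
    (hblock : ∀ x y, x.1 ≠ y.1 → star (u x) ⬝ᵥ uF y = 0) :
    traceNorm ((∑ x, ((c x : ℝ) : ℂ) • vecMulVec (u x) (star (u x)))
        * (∑ y, ((d y : ℝ) : ℂ) • vecMulVec (uF y) (star (uF y))))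
      ≤ ∑ k, ∑ j, c (k, j) * d (k, j) := by
  classical
  set M : Matrix (Fin dA × Fin dB) (Fin dA × Fin dB) ℂ :=
    (∑ x, ((c x : ℝ) : ℂ) • vecMulVec (u x) (star (u x)))
      * (∑ y, ((d y : ℝ) : ℂ) • vecMulVec (uF y) (star (uF y))) with hM
  have hMexp : M = ∑ x, ∑ y, (((c x : ℝ) : ℂ) * ((d y : ℝ) : ℂ) * (star (u x) ⬝ᵥ uF y)) •
      vecMulVec (u x) (star (uF y)) := qc_mul_expand c d u uF
  set N : Matrix (Fin dA × Fin dB) (Fin dA × Fin dB) ℂ := Mᴴ * M with hN_def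
  have hN : N.PosSemidef := posSemidef_conjTranspose_mul_self M
  set ev : Fin dA × Fin dB → ℝ := hN.1.eigenvalues with hev
  set s : Fin dA × Fin dB → ℝ := fun t => Real.sqrt (ev t) with hs
  have htrace : traceNorm M = ∑ t, s t := by
    unfold traceNorm
    exact qc_trace_sqrt N hN
  set w : Fin dA × Fin dB → (Fin dA × Fin dB → ℂ) :=
    fun t => ⇑(hN.1.eigenvectorBasis t) with hw
  have hworth : ∀ t t', star (w t) ⬝ᵥ w t' = if t = t' then 1 else 0 := by
    intro t t'
    have hon := hN.1.eigenvectorBasis.orthonormal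
    rw [orthonormal_iff_ite] at hon
    rw [← hon t t', hw]
    simp [dotProduct, EuclideanSpace.inner_eq_star_dotProduct, mul_comm]
  have heig : ∀ t, N *ᵥ w t = ev t • w t := fun t => hN.1.mulVec_eigenvectorBasis t
  have hMwMw : ∀ t t', star (M *ᵥ w t) ⬝ᵥ (M *ᵥ w t')
      = if t = t' then ((ev t' : ℝ) : ℂ) else 0 := by
    intro t t'
    rw [star_mulVec, ← dotProduct_mulVec, mulVec_mulVec, ← hN_def, heig t']
    rw [dotProduct_smul, hworth]
    split_ifs with h
    · simp [Complex.real_smul]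
    · simp
  have hev0 : ∀ t, 0 ≤ ev t := fun t => hN.eigenvalues_nonneg t
  have hs0 : ∀ t, 0 ≤ s t := fun t => Real.sqrt_nonneg _
  have hssq : ∀ t, s t * s t = ev t := fun t => Real.mul_self_sqrt (hev0 t)
  set v : Fin dA × Fin dB → (Fin dA × Fin dB → ℂ) :=
    fun t => if s t = 0 then 0 else (((s t : ℝ) : ℂ))⁻¹ • (M *ᵥ w t) with hv
  have hvdot : ∀ t t' : Fin dA × Fin dB, s t ≠ 0 → s t' ≠ 0 →
      star (v t) ⬝ᵥ v t' = (((s t : ℝ) : ℂ))⁻¹ * ((((s t' : ℝ) : ℂ))⁻¹ *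
        (star (M *ᵥ w t) ⬝ᵥ (M *ᵥ w t'))) := by
    intro t t' h1 h2
    rw [hv]
    simp only [if_neg h1, if_neg h2]
    rw [star_smul, smul_dotProduct, dotProduct_smul, smul_eq_mul, smul_eq_mul]
    congr 1
    simp [Complex.star_def, Complex.conj_ofReal]
  have hvorth : ∀ t t' : Fin dA × Fin dB, t ≠ t' → star (v t) ⬝ᵥ v t' = 0 := by
    intro t t' hne
    by_cases h1 : s t = 0
    · rw [hv]; simp [if_pos h1]
    by_cases h2 : s t' = 0
    · rw [hv]; simp [if_pos h2]
    rw [hvdot t t' h1 h2, hMwMw, if_neg hne]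
    ring
  have hvnorm : ∀ t : Fin dA × Fin dB, (star (v t) ⬝ᵥ v t).re ≤ 1 := by
    intro t
    by_cases h1 : s t = 0
    · rw [hv]; simp [if_pos h1]
    rw [hvdot t t h1 h1, hMwMw, if_pos rfl]
    rw [show (((s t : ℝ) : ℂ))⁻¹ * ((((s t : ℝ) : ℂ))⁻¹ * ((ev t : ℝ) : ℂ))
        = (((s t)⁻¹ * ((s t)⁻¹ * ev t) : ℝ) : ℂ) by push_cast; ring]
    rw [Complex.ofReal_re, ← hssq t]
    rw [show (s t)⁻¹ * ((s t)⁻¹ * (s t * s t)) = 1 by field_simp]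
  have hvMw : ∀ t : Fin dA × Fin dB, star (v t) ⬝ᵥ (M *ᵥ w t) = ((s t : ℝ) : ℂ) := by
    intro t
    by_cases h1 : s t = 0
    · rw [hv]
      simp [if_pos h1, h1]
    · rw [hv]
      simp only [if_neg h1]
      rw [star_smul, smul_dotProduct, smul_eq_mul, star_inv₀]
      rw [hMwMw, if_pos rfl]
      rw [show star ((s t : ℝ) : ℂ) = ((s t : ℝ) : ℂ) from Complex.conj_ofReal _]
      rw [show ((ev t : ℝ) : ℂ) = ((s t : ℝ) : ℂ) * ((s t : ℝ) : ℂ) by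
        rw [← hssq t]; push_cast; ring]
      field_simp
  have htrace2 : traceNorm M = (∑ t, star (v t) ⬝ᵥ (M *ᵥ w t)).re := by
    rw [htrace]
    have : (∑ t, star (v t) ⬝ᵥ (M *ᵥ w t)) = ∑ t, ((s t : ℝ) : ℂ) :=
      Finset.sum_congr rfl fun t _ => hvMw t
    rw [this, Complex.re_sum]
    exact (Finset.sum_congr rfl fun t _ => (Complex.ofReal_re _).symm)
  -- expansion of M *ᵥ w t
  have hMv : ∀ t : Fin dA × Fin dB, M *ᵥ w t = ∑ x, ∑ y,
      ((((c x : ℝ) : ℂ) * ((d y : ℝ) : ℂ) * (star (u x) ⬝ᵥ uF y)) * (star (uF y) ⬝ᵥ w t)) • u x := by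
    intro t
    rw [hMexp, qc_sum_mulVec]
    refine Finset.sum_congr rfl fun x _ => ?_
    rw [qc_sum_mulVec]
    refine Finset.sum_congr rfl fun y _ => ?_
    rw [smul_mulVec, qc_vecMulVec_mulVec, smul_smul]
  have hexp : ∀ t : Fin dA × Fin dB, star (v t) ⬝ᵥ (M *ᵥ w t) = ∑ x, ∑ y,
      (((c x : ℝ) : ℂ) * ((d y : ℝ) : ℂ) * (star (u x) ⬝ᵥ uF y)) * (star (uF y) ⬝ᵥ w t)
        * (star (v t) ⬝ᵥ u x) := by
    intro t
    rw [hMv t, qc_dotProduct_sum]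
    refine Finset.sum_congr rfl fun x _ => ?_
    rw [qc_dotProduct_sum]
    refine Finset.sum_congr rfl fun y _ => ?_
    rw [dotProduct_smul, smul_eq_mul]
  set G : (Fin dB × Fin dA) → (Fin dB × Fin dA) → ℂ :=
    fun x y => ∑ t, (star (v t) ⬝ᵥ u x) * (star (uF y) ⬝ᵥ w t) with hG
  have hsum : (∑ t, star (v t) ⬝ᵥ (M *ᵥ w t)) = ∑ x, ∑ y,
      (((c x : ℝ) : ℂ) * ((d y : ℝ) : ℂ) * (star (u x) ⬝ᵥ uF y)) * G x y := by
    calc (∑ t, star (v t) ⬝ᵥ (M *ᵥ w t))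
        = ∑ t, ∑ x, ∑ y, (((c x : ℝ) : ℂ) * ((d y : ℝ) : ℂ) * (star (u x) ⬝ᵥ uF y))
            * (star (uF y) ⬝ᵥ w t) * (star (v t) ⬝ᵥ u x) :=
          Finset.sum_congr rfl fun t _ => hexp t
      _ = ∑ x, ∑ t, ∑ y, (((c x : ℝ) : ℂ) * ((d y : ℝ) : ℂ) * (star (u x) ⬝ᵥ uF y))
            * (star (uF y) ⬝ᵥ w t) * (star (v t) ⬝ᵥ u x) := Finset.sum_comm
      _ = ∑ x, ∑ y, ∑ t, (((c x : ℝ) : ℂ) * ((d y : ℝ) : ℂ) * (star (u x) ⬝ᵥ uF y))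
            * (star (uF y) ⬝ᵥ w t) * (star (v t) ⬝ᵥ u x) :=
          Finset.sum_congr rfl fun x _ => Finset.sum_comm
      _ = _ := by
          refine Finset.sum_congr rfl fun x _ => Finset.sum_congr rfl fun y _ => ?_
          rw [hG, Finset.mul_sum]
          exact Finset.sum_congr rfl fun t _ => by ring
  -- orthonormal-family reformulations
  have hworth' : ∀ t t', t ≠ t' → star (w t) ⬝ᵥ w t' = 0 :=
    fun t t' h => by rw [hworth, if_neg h]
  have hwnorm' : ∀ t, (star (w t) ⬝ᵥ w t).re ≤ 1 :=
    fun t => by rw [hworth, if_pos rfl]; simp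
  have huorth' : ∀ x y, x ≠ y → star (u x) ⬝ᵥ u y = 0 :=
    fun x y h => by rw [hu, if_neg h]
  have hunorm' : ∀ x, (star (u x) ⬝ᵥ u x).re ≤ 1 :=
    fun x => by rw [hu, if_pos rfl]; simp
  have huForth' : ∀ x y, x ≠ y → star (uF x) ⬝ᵥ uF y = 0 :=
    fun x y h => by rw [huF, if_neg h]
  have huFnorm' : ∀ x, (star (uF x) ⬝ᵥ uF x).re ≤ 1 :=
    fun x => by rw [huF, if_pos rfl]; simp
  have hunorm1 : ∀ x, (star (u x) ⬝ᵥ u x).re = 1 :=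
    fun x => by rw [hu, if_pos rfl]; simp
  have huFnorm1 : ∀ x, (star (uF x) ⬝ᵥ uF x).re = 1 :=
    fun x => by rw [huF, if_pos rfl]; simp
  -- the two auxiliary vectors
  set z : (Fin dB × Fin dA) → (Fin dA × Fin dB → ℂ) :=
    fun x => ∑ t, (star (v t) ⬝ᵥ u x) • w t with hz
  have hGz : ∀ x y, G x y = star (uF y) ⬝ᵥ z x := by
    intro x y
    rw [hG, hz, qc_dotProduct_sum]
    refine Finset.sum_congr rfl fun t _ => ?_
    rw [dotProduct_smul, smul_eq_mul]
  set zz : (Fin dB × Fin dA) → (Fin dA × Fin dB → ℂ) :=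
    fun y => ∑ t, (star (w t) ⬝ᵥ uF y) • v t with hzz
  have hGzz : ∀ x y, (starRingEnd ℂ) (G x y) = star (u x) ⬝ᵥ zz y := by
    intro x y
    rw [hG, hzz, map_sum, qc_dotProduct_sum]
    refine Finset.sum_congr rfl fun t _ => ?_
    rw [dotProduct_smul, smul_eq_mul, _root_.map_mul, qc_conj_inn, qc_conj_inn]
    ring
  have hznorm : ∀ x, (star (z x) ⬝ᵥ z x).re ≤ 1 := by
    intro x
    have h1 := qc_norm_comb_le w hworth' hwnorm' (fun t => star (v t) ⬝ᵥ u x)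
    have h2 := qc_bessel v hvorth hvnorm (u x)
    have h3 := hunorm1 x
    rw [hz]
    calc (star (∑ t, (star (v t) ⬝ᵥ u x) • w t) ⬝ᵥ (∑ t, (star (v t) ⬝ᵥ u x) • w t)).re
        ≤ ∑ t, Complex.normSq (star (v t) ⬝ᵥ u x) := h1
      _ ≤ (star (u x) ⬝ᵥ u x).re := h2
      _ ≤ 1 := le_of_eq h3
  have hzznorm : ∀ y, (star (zz y) ⬝ᵥ zz y).re ≤ 1 := by
    intro y
    have h1 := qc_norm_comb_le v hvorth hvnorm (fun t => star (w t) ⬝ᵥ uF y)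
    have h2 := qc_bessel w hworth' hwnorm' (uF y)
    have h3 := huFnorm1 y
    rw [hzz]
    calc (star (∑ t, (star (w t) ⬝ᵥ uF y) • v t) ⬝ᵥ (∑ t, (star (w t) ⬝ᵥ uF y) • v t)).re
        ≤ ∑ t, Complex.normSq (star (w t) ⬝ᵥ uF y) := h1
      _ ≤ (star (uF y) ⬝ᵥ uF y).re := h2
      _ ≤ 1 := le_of_eq h3
  -- row and column bounds
  have hCrow : ∀ (k : Fin dB) (i : Fin dA),
      ∑ j, Complex.normSq (star (u (k,i)) ⬝ᵥ uF (k,j)) ≤ 1 := by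
    intro k i
    have h2 := qc_bessel (fun j : Fin dA => uF (k,j))
      (fun a b hab => huForth' (k,a) (k,b) (by simp [Prod.ext_iff, hab]))
      (fun a => huFnorm' (k,a)) (u (k,i))
    calc ∑ j, Complex.normSq (star (u (k,i)) ⬝ᵥ uF (k,j))
        = ∑ j, Complex.normSq (star (uF (k,j)) ⬝ᵥ u (k,i)) := by
          refine Finset.sum_congr rfl fun j _ => ?_
          rw [← Complex.normSq_conj, qc_conj_inn]
      _ ≤ (star (u (k,i)) ⬝ᵥ u (k,i)).re := h2
      _ ≤ 1 := le_of_eq (hunorm1 _)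
  have hCcol : ∀ (k : Fin dB) (j : Fin dA),
      ∑ i, Complex.normSq (star (u (k,i)) ⬝ᵥ uF (k,j)) ≤ 1 := by
    intro k j
    have h2 := qc_bessel (fun i : Fin dA => u (k,i))
      (fun a b hab => huorth' (k,a) (k,b) (by simp [Prod.ext_iff, hab]))
      (fun a => hunorm' (k,a)) (uF (k,j))
    calc ∑ i, Complex.normSq (star (u (k,i)) ⬝ᵥ uF (k,j))
        ≤ (star (uF (k,j)) ⬝ᵥ uF (k,j)).re := h2
      _ ≤ 1 := le_of_eq (huFnorm1 _)
  have hGrow : ∀ (k : Fin dB) (i : Fin dA),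
      ∑ j, Complex.normSq (G (k,i) (k,j)) ≤ 1 := by
    intro k i
    have hsub : (∑ j, Complex.normSq (star (uF (k, j)) ⬝ᵥ z (k,i)))
        ≤ ∑ y : Fin dB × Fin dA, Complex.normSq (star (uF y) ⬝ᵥ z (k,i)) := by
      rw [Fintype.sum_prod_type]
      exact Finset.single_le_sum
        (f := fun l => ∑ j, Complex.normSq (star (uF (l, j)) ⬝ᵥ z (k,i)))
        (fun l _ => Finset.sum_nonneg fun j _ => Complex.normSq_nonneg _) (Finset.mem_univ k)
    have hb := qc_bessel uF huForth' huFnorm' (z (k,i))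
    calc ∑ j, Complex.normSq (G (k,i) (k,j))
        = ∑ j, Complex.normSq (star (uF (k,j)) ⬝ᵥ z (k,i)) := by
          refine Finset.sum_congr rfl fun j _ => ?_
          rw [hGz]
      _ ≤ ∑ y : Fin dB × Fin dA, Complex.normSq (star (uF y) ⬝ᵥ z (k,i)) := hsub
      _ ≤ (star (z (k,i)) ⬝ᵥ z (k,i)).re := hb
      _ ≤ 1 := hznorm _
  have hGcol : ∀ (k : Fin dB) (j : Fin dA),
      ∑ i, Complex.normSq (G (k,i) (k,j)) ≤ 1 := by
    intro k j
    have hsub : (∑ i, Complex.normSq (star (u (k, i)) ⬝ᵥ zz (k,j)))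
        ≤ ∑ x : Fin dB × Fin dA, Complex.normSq (star (u x) ⬝ᵥ zz (k,j)) := by
      rw [Fintype.sum_prod_type]
      exact Finset.single_le_sum
        (f := fun l => ∑ i, Complex.normSq (star (u (l, i)) ⬝ᵥ zz (k,j)))
        (fun l _ => Finset.sum_nonneg fun i _ => Complex.normSq_nonneg _) (Finset.mem_univ k)
    have hb := qc_bessel u huorth' hunorm' (zz (k,j))
    calc ∑ i, Complex.normSq (G (k,i) (k,j))
        = ∑ i, Complex.normSq (star (u (k,i)) ⬝ᵥ zz (k,j)) := by
          refine Finset.sum_congr rfl fun i _ => ?_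
          rw [← hGzz, Complex.normSq_conj]
      _ ≤ ∑ x : Fin dB × Fin dA, Complex.normSq (star (u x) ⬝ᵥ zz (k,j)) := hsub
      _ ≤ (star (zz (k,j)) ⬝ᵥ zz (k,j)).re := hb
      _ ≤ 1 := hzznorm _
  -- the absolute value bound
  have habs_le : traceNorm M ≤ ∑ x, ∑ y,
      c x * d y * ‖star (u x) ⬝ᵥ uF y‖ * ‖G x y‖ := by
    rw [htrace2, hsum]
    calc (∑ x, ∑ y, (((c x : ℝ) : ℂ) * ((d y : ℝ) : ℂ) * (star (u x) ⬝ᵥ uF y)) * G x y).re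
        = ∑ x, ∑ y, ((((c x : ℝ) : ℂ) * ((d y : ℝ) : ℂ) * (star (u x) ⬝ᵥ uF y)) * G x y).re := by
          rw [Complex.re_sum]
          exact Finset.sum_congr rfl fun x _ => Complex.re_sum _ _
      _ ≤ ∑ x, ∑ y, ‖(((c x : ℝ) : ℂ) * ((d y : ℝ) : ℂ) * (star (u x) ⬝ᵥ uF y)) * G x y‖ := by
          refine Finset.sum_le_sum fun x _ => Finset.sum_le_sum fun y _ => ?_
          exact Complex.re_le_norm _
      _ = ∑ x, ∑ y, c x * d y * ‖star (u x) ⬝ᵥ uF y‖ * ‖G x y‖ := by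
          refine Finset.sum_congr rfl fun x _ => Finset.sum_congr rfl fun y _ => ?_
          rw [norm_mul, norm_mul, norm_mul, Complex.norm_real, Complex.norm_real, Real.norm_eq_abs,
              Real.norm_eq_abs,
            abs_of_nonneg (hc0 x), abs_of_nonneg (hd0 y)]
  -- collapse to blocks
  have hcollapse : (∑ x, ∑ y, c x * d y * ‖star (u x) ⬝ᵥ uF y‖ * ‖G x y‖)
      = ∑ k, ∑ i, ∑ j, c (k,i) * d (k,j) * ‖star (u (k,i)) ⬝ᵥ uF (k,j)‖
          * ‖G (k,i) (k,j)‖ := by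
    rw [Fintype.sum_prod_type]
    refine Finset.sum_congr rfl fun k _ => Finset.sum_congr rfl fun i _ => ?_
    rw [Fintype.sum_prod_type]
    rw [Finset.sum_eq_single k]
    · intro l _ hlk
      refine Finset.sum_eq_zero fun j _ => ?_
      rw [hblock (k,i) (l,j) (Ne.symm hlk)]
      simp
    · intro hk; exact absurd (Finset.mem_univ k) hk
  -- per block bound
  have hperk : ∀ k : Fin dB,
      (∑ i, ∑ j, c (k,i) * d (k,j) * ‖star (u (k,i)) ⬝ᵥ uF (k,j)‖
          * ‖G (k,i) (k,j)‖)
      ≤ ∑ j, c (k,j) * d (k,j) := by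
    intro k
    have s2 : ∑ i, ∑ j, (c (k,i)) * (d (k,j)) * (‖star (u (k,i)) ⬝ᵥ uF (k,j)‖)^2
        ≤ ∑ j, c (k,j) * d (k,j) := by
      have := qc_substoch (fun i => c (k,i)) (fun j => d (k,j))
        (fun i j => (‖star (u (k,i)) ⬝ᵥ uF (k,j)‖)^2)
        (fun i => hc0 _) (fun j => hd0 _)
        (fun i j hij => hcmono k i j hij) (fun i j hij => hdmono k i j hij)
        (fun i j => sq_nonneg _)
        (fun i => by simpa only [Complex.sq_norm] using hCrow k i)
        (fun j => by simpa only [Complex.sq_norm] using hCcol k j)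
      exact this
    have s3 : ∑ i, ∑ j, (c (k,i)) * (d (k,j)) * (‖G (k,i) (k,j)‖)^2
        ≤ ∑ j, c (k,j) * d (k,j) := by
      have := qc_substoch (fun i => c (k,i)) (fun j => d (k,j))
        (fun i j => (‖G (k,i) (k,j)‖)^2)
        (fun i => hc0 _) (fun j => hd0 _)
        (fun i j hij => hcmono k i j hij) (fun i j hij => hdmono k i j hij)
        (fun i j => sq_nonneg _)
        (fun i => by simpa only [Complex.sq_norm] using hGrow k i)
        (fun j => by simpa only [Complex.sq_norm] using hGcol k j)
      exact this
    have step1 : (∑ i, ∑ j, c (k,i) * d (k,j) * ‖star (u (k,i)) ⬝ᵥ uF (k,j)‖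
          * ‖G (k,i) (k,j)‖)
        ≤ (1/2) * ((∑ i, ∑ j, (c (k,i)) * (d (k,j)) * (‖star (u (k,i)) ⬝ᵥ uF (k,j)‖)^2)
            + ∑ i, ∑ j, (c (k,i)) * (d (k,j)) * (‖G (k,i) (k,j)‖)^2) := by
      have hcomb : (1/2 : ℝ) * ((∑ i, ∑ j, (c (k,i)) * (d (k,j)) * (‖star (u (k,i)) ⬝ᵥ uF (k,j)‖)^2)
            + ∑ i, ∑ j, (c (k,i)) * (d (k,j)) * (‖G (k,i) (k,j)‖)^2)
          = ∑ i, ∑ j, (1/2) * ((c (k,i)) * (d (k,j)) * (‖star (u (k,i)) ⬝ᵥ uF (k,j)‖)^2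
              + (c (k,i)) * (d (k,j)) * (‖G (k,i) (k,j)‖)^2) := by
        rw [← Finset.sum_add_distrib, Finset.mul_sum]
        refine Finset.sum_congr rfl fun i _ => ?_
        rw [← Finset.sum_add_distrib, Finset.mul_sum]
      rw [hcomb]
      refine Finset.sum_le_sum fun i _ => Finset.sum_le_sum fun j _ => ?_
      have habG : ‖star (u (k,i)) ⬝ᵥ uF (k,j)‖ * ‖G (k,i) (k,j)‖
          ≤ (1/2) * ((‖star (u (k,i)) ⬝ᵥ uF (k,j)‖)^2 + (‖G (k,i) (k,j)‖)^2) := by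
        nlinarith [sq_nonneg (‖star (u (k,i)) ⬝ᵥ uF (k,j)‖ - ‖G (k,i) (k,j)‖)]
      have hcd : 0 ≤ c (k,i) * d (k,j) := mul_nonneg (hc0 _) (hd0 _)
      calc c (k,i) * d (k,j) * ‖star (u (k,i)) ⬝ᵥ uF (k,j)‖ * ‖G (k,i) (k,j)‖
          = (c (k,i) * d (k,j)) * (‖star (u (k,i)) ⬝ᵥ uF (k,j)‖ * ‖G (k,i) (k,j)‖) := by ring
        _ ≤ (c (k,i) * d (k,j)) * ((1/2) * ((‖star (u (k,i)) ⬝ᵥ uF (k,j)‖)^2 + (‖G (k,i) (k,j)‖)^2)) :=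
            mul_le_mul_of_nonneg_left habG hcd
        _ = (1/2) * ((c (k,i)) * (d (k,j)) * (‖star (u (k,i)) ⬝ᵥ uF (k,j)‖)^2
              + (c (k,i)) * (d (k,j)) * (‖G (k,i) (k,j)‖)^2) := by ring
    calc (∑ i, ∑ j, c (k,i) * d (k,j) * ‖star (u (k,i)) ⬝ᵥ uF (k,j)‖
          * ‖G (k,i) (k,j)‖)
        ≤ (1/2) * ((∑ i, ∑ j, (c (k,i)) * (d (k,j)) * (‖star (u (k,i)) ⬝ᵥ uF (k,j)‖)^2)
            + ∑ i, ∑ j, (c (k,i)) * (d (k,j)) * (‖G (k,i) (k,j)‖)^2) := step1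
      _ ≤ (1/2) * ((∑ j, c (k,j) * d (k,j)) + ∑ j, c (k,j) * d (k,j)) := by
          have := add_le_add s2 s3
          linarith
      _ = ∑ j, c (k,j) * d (k,j) := by ring
  calc traceNorm M
      ≤ ∑ x, ∑ y, c x * d y * ‖star (u x) ⬝ᵥ uF y‖ * ‖G x y‖ := habs_le
    _ = ∑ k, ∑ i, ∑ j, c (k,i) * d (k,j) * ‖star (u (k,i)) ⬝ᵥ uF (k,j)‖
          * ‖G (k,i) (k,j)‖ := hcollapse
    _ ≤ ∑ k, ∑ j, c (k,j) * d (k,j) := Finset.sum_le_sum fun k _ => hperk k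

/-- For quantum-classical states `ρ = ∑_{k,j} p_{jk} α_k |e_{jk}⟩⟨e_{jk}| ⊗ |f_k⟩⟨f_k|`
and `σ = ∑_{k,j} q_{jk} β_k |ẽ_{jk}⟩⟨ẽ_{jk}| ⊗ |f_k⟩⟨f_k|`, with the eigenvalues
sorted in nonincreasing order in `j` for each `k`, the fidelity satisfies
`F(ρ,σ) = ‖√ρ √σ‖₁ ≤ ∑_{k,j} √(p_{jk} α_k) √(q_{jk} β_k)`. -/
theorem qc_fidelity_le_sorted_eigenvalue_sum {dA dB : ℕ}
    (α β : Fin dB → ℝ) (p q : Fin dB → Fin dA → ℝ)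
    (hα : ∀ k, 0 ≤ α k) (hβ : ∀ k, 0 ≤ β k)
    (hαsum : ∑ k, α k = 1) (hβsum : ∑ k, β k = 1)
    (hp : ∀ k j, 0 ≤ p k j) (hq : ∀ k j, 0 ≤ q k j)
    (hpsum : ∀ k, ∑ j, p k j = 1) (hqsum : ∀ k, ∑ j, q k j = 1)
    (hpsort : ∀ k, ∀ i j : Fin dA, i ≤ j → p k j ≤ p k i)
    (hqsort : ∀ k, ∀ i j : Fin dA, i ≤ j → q k j ≤ q k i)
    (e et : Fin dB → Fin dA → (Fin dA → ℂ)) (f : Fin dB → (Fin dB → ℂ))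
    (he : ∀ k i j, star (e k i) ⬝ᵥ e k j = if i = j then 1 else 0)
    (het : ∀ k i j, star (et k i) ⬝ᵥ et k j = if i = j then 1 else 0)
    (hf : ∀ k l, star (f k) ⬝ᵥ f l = if k = l then 1 else 0)
    (ρ σ : Matrix (Fin dA × Fin dB) (Fin dA × Fin dB) ℂ)
    (hρ : ρ.PosSemidef) (hσ : σ.PosSemidef)
    (hρdef : ρ = ∑ k, ∑ j, ((p k j * α k : ℝ) : ℂ) •
        (vecMulVec (e k j) (star (e k j)) ⊗ₖ vecMulVec (f k) (star (f k))))
    (hσdef : σ = ∑ k, ∑ j, ((q k j * β k : ℝ) : ℂ) •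
        (vecMulVec (et k j) (star (et k j)) ⊗ₖ vecMulVec (f k) (star (f k)))) :
    traceNorm (hρ.sqrt * hσ.sqrt) ≤
      ∑ k, ∑ j, Real.sqrt (p k j * α k) * Real.sqrt (q k j * β k) := by
  classical
  set u : Fin dB × Fin dA → (Fin dA × Fin dB → ℂ) :=
    fun x z => e x.1 x.2 z.1 * f x.1 z.2 with hu_def
  set uF : Fin dB × Fin dA → (Fin dA × Fin dB → ℂ) :=
    fun x z => et x.1 x.2 z.1 * f x.1 z.2 with huF_def
  set c : Fin dB × Fin dA → ℝ := fun x => Real.sqrt (p x.1 x.2 * α x.1) with hc_def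
  set d : Fin dB × Fin dA → ℝ := fun x => Real.sqrt (q x.1 x.2 * β x.1) with hd_def
  have hu_orth : ∀ x y, star (u x) ⬝ᵥ u y = if x = y then 1 else 0 := by
    rintro ⟨k, i⟩ ⟨l, j⟩
    simp only [hu_def]
    rw [qc_dot_tensor (e k i) (e l j) (f k) (f l), hf k l]
    by_cases hkl : k = l
    · subst hkl
      rw [if_pos rfl, he k i j, mul_one]
      by_cases hij : i = j <;> simp [hij, Prod.ext_iff]
    · rw [if_neg hkl, mul_zero]
      simp [Prod.ext_iff, hkl]
  have huF_orth : ∀ x y, star (uF x) ⬝ᵥ uF y = if x = y then 1 else 0 := by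
    rintro ⟨k, i⟩ ⟨l, j⟩
    simp only [huF_def]
    rw [qc_dot_tensor (et k i) (et l j) (f k) (f l), hf k l]
    by_cases hkl : k = l
    · subst hkl
      rw [if_pos rfl, het k i j, mul_one]
      by_cases hij : i = j <;> simp [hij, Prod.ext_iff]
    · rw [if_neg hkl, mul_zero]
      simp [Prod.ext_iff, hkl]
  have hblock : ∀ x y : Fin dB × Fin dA, x.1 ≠ y.1 → star (u x) ⬝ᵥ uF y = 0 := by
    rintro ⟨k, i⟩ ⟨l, j⟩ hkl
    simp only [hu_def, huF_def]
    rw [qc_dot_tensor (e k i) (et l j) (f k) (f l), hf k l, if_neg hkl, mul_zero]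
  have hc0 : ∀ x, 0 ≤ c x := fun x => Real.sqrt_nonneg _
  have hd0 : ∀ x, 0 ≤ d x := fun x => Real.sqrt_nonneg _
  have hcmono : ∀ (k : Fin dB) (i j : Fin dA), i ≤ j → c (k, j) ≤ c (k, i) := by
    intro k i j hij
    exact Real.sqrt_le_sqrt (mul_le_mul_of_nonneg_right (hpsort k i j hij) (hα k))
  have hdmono : ∀ (k : Fin dB) (i j : Fin dA), i ≤ j → d (k, j) ≤ d (k, i) := by
    intro k i j hij
    exact Real.sqrt_le_sqrt (mul_le_mul_of_nonneg_right (hqsort k i j hij) (hβ k))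
  have hRsq : (∑ x : Fin dB × Fin dA, ((c x : ℝ) : ℂ) • vecMulVec (u x) (star (u x))) ^ 2 = ρ := by
    rw [pow_two, qc_sq_sum c u hu_orth, hρdef, Fintype.sum_prod_type]
    refine Finset.sum_congr rfl fun k _ => Finset.sum_congr rfl fun j _ => ?_
    rw [qc_kron_vecMulVec]
    simp only [hc_def, hu_def]
    rw [Real.mul_self_sqrt (mul_nonneg (hp k j) (hα k))]
  have hTsq : (∑ x : Fin dB × Fin dA, ((d x : ℝ) : ℂ) • vecMulVec (uF x) (star (uF x))) ^ 2 = σ := by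
    rw [pow_two, qc_sq_sum d uF huF_orth, hσdef, Fintype.sum_prod_type]
    refine Finset.sum_congr rfl fun k _ => Finset.sum_congr rfl fun j _ => ?_
    rw [qc_kron_vecMulVec]
    simp only [hd_def, huF_def]
    rw [Real.mul_self_sqrt (mul_nonneg (hq k j) (hβ k))]
  have hRsqrt : (∑ x : Fin dB × Fin dA, ((c x : ℝ) : ℂ) • vecMulVec (u x) (star (u x)))
      = hρ.sqrt := qc_eq_sqrt_of_sq_eq (qc_posSemidef_sum c hc0 u) hρ hRsq
  have hTsqrt : (∑ x : Fin dB × Fin dA, ((d x : ℝ) : ℂ) • vecMulVec (uF x) (star (uF x)))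
      = hσ.sqrt := qc_eq_sqrt_of_sq_eq (qc_posSemidef_sum d hd0 uF) hσ hTsq
  rw [← hRsqrt, ← hTsqrt]
  exact qc_main c d hc0 hd0 hcmono hdmono u uF hu_orth huF_orth hblock
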